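/- Suppose Σ has at least two distinct states. Then the closure operator λ is simple (λ(∅) = ∅ and λ({p}) = {p} for every p ∈ Σ) if and only if property (A) holds: for all p,q ∈ Σ, ξ(p) ⊆ ξ(q) implies p = q. -/
import Mathlib


universe u v

/-- A state property system: states, a complete lattice of properties, and
the actuality map `xi` assigning to each state the set of actual properties. -/
structure SPS (σ : Type u) (L : Type v) [CompleteLattice L] where
  xi : σ → Set L
  top_mem : ∀ p, ⊤ ∈ xi p
  bot_not_mem : ∀ p, ⊥ ∉ xi p
  sInf_mem : ∀ (p : σ) (A : Set L), (∀ a ∈ A, a ∈ xi p) ↔ sInf A ∈ xi p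
  le_iff : ∀ a b : L, a ≤ b ↔ ∀ r, a ∈ xi r → b ∈ xi r

variable {σ : Type u} {L : Type v} [CompleteLattice L]

/-- λ{p,q} : the set of superpositions of the pair p, q. -/
def SPS.lamPair (S : SPS σ L) (p q : σ) : Set σ := {s | S.xi p ∩ S.xi q ⊆ S.xi s}

/-- A set is λ-closed if it contains λ{p,q} for each pair of its points. -/
def SPS.lamClosed (S : SPS σ L) (T : Set σ) : Prop :=
  ∀ p ∈ T, ∀ q ∈ T, S.lamPair p q ⊆ T

/-- λ(P) : the intersection of all λ-closed sets containing P. -/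
def SPS.lam (S : SPS σ L) (P : Set σ) : Set σ :=
  ⋂₀ {G | S.lamClosed G ∧ P ⊆ G}

/-- The set of superpositions of a set of states. -/
def SPS.bar (S : SPS σ L) (T : Set σ) : Set σ :=
  {p | (⋂ s ∈ T, S.xi s) ⊆ S.xi p}

/-- Property (A): at least two states and `xi` order-reflecting (injective). -/
def SPS.propA (S : SPS σ L) : Prop :=
  (∃ p q : σ, p ≠ q) ∧ ∀ p q : σ, S.xi p ⊆ S.xi q → p = q

/-- p is a minimal superposition of A. -/
def SPS.minSup (S : SPS σ L) (A : Set σ) (p : σ) : Prop :=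
  p ∈ S.bar A ∧ ∀ Q : Set σ, Q ⊂ A → p ∉ S.bar Q

/-- The minimal superposition principle for a given set A. -/
def SPS.MSPon (S : SPS σ L) (A : Set σ) : Prop :=
  ∀ p : σ, S.minSup A p →
    ∀ S₁ S₂ : Set σ, S₁ ⊂ A → S₂ ⊂ A → S₁ ∩ S₂ = ∅ → S₁ ∪ S₂ = A →
      (S.bar (S₁ ∪ {p}) ∩ S.bar S₂).Nonempty

/-- n-MSP : MSP for all sets of cardinality at most n. -/
def SPS.nMSP (S : SPS σ L) (n : ℕ) : Prop :=
  ∀ A : Set σ, A.Finite → A.ncard ≤ n → S.MSPon A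

/-- f-MSP : MSP for all finite sets. -/
def SPS.fMSP (S : SPS σ L) : Prop := ∀ A : Set σ, A.Finite → S.MSPon A

theorem stmt2 (S : SPS σ L) (htwo : ∃ p q : σ, p ≠ q) :
    (S.lam ∅ = ∅ ∧ ∀ p : σ, S.lam {p} = {p}) ↔
      (∀ p q : σ, S.xi p ⊆ S.xi q → p = q) := by
  constructor
  · rintro ⟨-, hsing⟩ p q hpq
    -- {p} is λ-closed since lam {p} = {p} and lam is an intersection of closed sets
    have hclosed : S.lamClosed {p} := by
      rw [← hsing p]
      intro a ha b hb s hs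
      intro G hG
      have hG' := hG
      obtain ⟨hGc, hGp⟩ := hG'
      exact hGc a (ha G hG) b (hb G hG) hs
    have : q ∈ S.lamPair p p := by
      intro x hx
      exact hpq hx.1
    have := hclosed p rfl p rfl this
    exact this.symm
  · intro hA
    constructor
    · apply subset_antisymm
      · intro x hx
        exact hx ∅ ⟨fun p hp => hp.elim, subset_refl _⟩
      · exact Set.empty_subset _
    · intro p
      apply subset_antisymm
      · intro x hx
        refine hx {p} ⟨?_, subset_refl _⟩
        intro a ha b hb s hs
        have ha' : a = p := ha
        have hb' : b = p := hb
        have hps : S.xi p ⊆ S.xi s := by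
          intro x hx
          apply hs
          refine ⟨?_, ?_⟩
          · rw [ha']; exact hx
          · rw [hb']; exact hx
        exact (hA p s hps).symm
      · intro x hx G hG
        exact hG.2 hx
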